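/- Let z1, z2 ≥ 0, γ1, γ2 ∈ [0,1), and λ1, λ2, λ3, μ1, μ2, μ3 ≥ 0 satisfy z1 ≤ λ1·z1^γ1 + λ2·z2 + λ3 and z2 ≤ μ1·z1 + μ2·z2^γ2 + μ3. If λ2·μ1 < 1, then there exists a constant M (depending only on the parameters λi, μi, γ1, γ2, but not on z1, z2) such that z1 ≤ M and z2 ≤ M. -/

import Mathlib

set_option maxHeartbeats 1000000

private lemma eps_bound (γ ε x : ℝ) (hγ0 : 0 ≤ γ) (hγ : γ < 1) (hε : 0 < ε) (hx : 0 ≤ x) :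
    x ^ γ ≤ ε * x + (1/ε) ^ (γ/(1-γ)) := by
  have h1γ : 0 < 1 - γ := by linarith
  set B := (1/ε : ℝ) ^ (1/(1-γ)) with hBdef
  have hB : 0 < B := Real.rpow_pos_of_pos (by positivity) _
  rcases le_or_gt x B with h | h
  · have hle : x ^ γ ≤ B ^ γ := Real.rpow_le_rpow hx h hγ0
    have hBγ : B ^ γ = (1/ε) ^ (γ/(1-γ)) := by
      rw [hBdef, ← Real.rpow_mul (by positivity)]
      congr 1
      rw [div_mul_eq_mul_div, one_mul]
    have hεx : 0 ≤ ε * x := by positivity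
    rw [hBγ] at hle
    linarith
  · have hx0 : 0 < x := hB.trans h
    have hBx : B ^ (1-γ) ≤ x ^ (1-γ) := Real.rpow_le_rpow hB.le h.le h1γ.le
    have hB1 : B ^ (1-γ) = 1/ε := by
      rw [hBdef, ← Real.rpow_mul (by positivity)]
      rw [one_div_mul_cancel (ne_of_gt h1γ), Real.rpow_one]
    have hxsplit : x ^ γ * x ^ (1-γ) = x := by
      rw [← Real.rpow_add hx0]; norm_num
    have hxγ : 0 < x ^ γ := Real.rpow_pos_of_pos hx0 _
    have hkey : x ^ γ * (1/ε) ≤ x := by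
      calc x ^ γ * (1/ε) ≤ x ^ γ * x ^ (1-γ) := by
            apply mul_le_mul_of_nonneg_left _ hxγ.le
            rw [← hB1]; exact hBx
        _ = x := hxsplit
    have hC : 0 ≤ (1/ε : ℝ) ^ (γ/(1-γ)) := Real.rpow_nonneg (by positivity) _
    have : x ^ γ ≤ ε * x := by
      rw [div_eq_mul_inv, one_mul] at hkey
      rw [← mul_le_mul_iff_left₀ (inv_pos.mpr hε)]
      calc x ^ γ * ε⁻¹ ≤ x := hkey
        _ = ε * x * ε⁻¹ := by field_simp
    linarith

private lemma sub1 (γ a b x : ℝ) (hγ0 : 0 ≤ γ) (hγ : γ < 1) (ha : 0 ≤ a) (hb : 0 ≤ b)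
    (hx : 0 ≤ x) (h : x ≤ a * x ^ γ + b) :
    x ≤ max 1 ((2*a) ^ (1/(1-γ))) + 2*b := by
  set K := max 1 ((2*a : ℝ) ^ (1/(1-γ))) with hK
  rcases le_or_gt x K with hKx | hKx
  · linarith
  · have hx1 : (1:ℝ) < x := lt_of_le_of_lt (le_max_left _ _) hKx
    have h2a : (2*a) ^ (1/(1-γ)) < x := lt_of_le_of_lt (le_max_right _ _) hKx
    have h1γ : 0 < 1 - γ := by linarith
    have hax : 2*a ≤ x ^ (1-γ) := by
      have : ((2*a) ^ (1/(1-γ))) ^ (1-γ) ≤ x ^ (1-γ) :=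
        Real.rpow_le_rpow (Real.rpow_nonneg (by positivity) _) h2a.le h1γ.le
      rwa [← Real.rpow_mul (by positivity), one_div_mul_cancel (ne_of_gt h1γ),
        Real.rpow_one] at this
    have hxsplit : x ^ γ * x ^ (1-γ) = x := by
      rw [← Real.rpow_add (by linarith)]; norm_num
    have hxγ : 0 ≤ x ^ γ := Real.rpow_nonneg hx _
    have h2 : 2 * (a * x ^ γ) ≤ x := by
      calc 2 * (a * x ^ γ) = (2*a) * x ^ γ := by ring
        _ ≤ x ^ (1-γ) * x ^ γ := mul_le_mul_of_nonneg_right hax hxγ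
        _ = x := by rw [mul_comm]; exact hxsplit
    have hK1 : (1:ℝ) ≤ K := le_max_left _ _
    linarith

theorem stmt_0 (γ₁ γ₂ l₁ l₂ l₃ m₁ m₂ m₃ : ℝ)
    (hγ₁ : 0 ≤ γ₁) (hγ₁' : γ₁ < 1) (hγ₂ : 0 ≤ γ₂) (hγ₂' : γ₂ < 1)
    (hl₁ : 0 ≤ l₁) (hl₂ : 0 ≤ l₂) (hl₃ : 0 ≤ l₃)
    (hm₁ : 0 ≤ m₁) (hm₂ : 0 ≤ m₂) (hm₃ : 0 ≤ m₃)
    (hcross : l₂ * m₁ < 1) :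
    ∃ M : ℝ, ∀ z₁ z₂ : ℝ, 0 ≤ z₁ → 0 ≤ z₂ →
      z₁ ≤ l₁ * z₁ ^ γ₁ + l₂ * z₂ + l₃ →
      z₂ ≤ m₁ * z₁ + m₂ * z₂ ^ γ₂ + m₃ →
      z₁ ≤ M ∧ z₂ ≤ M := by
  have hlm : 0 ≤ l₂ * m₁ := mul_nonneg hl₂ hm₁
  set δ : ℝ := (1 - l₂*m₁)/2 with hδdef
  have hδ : 0 < δ := by simp [hδdef]; linarith
  have h1δ : 0 < 1 - δ := by simp [hδdef]; linarith
  set ε : ℝ := δ/(m₂+1) with hεdef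
  have hε : 0 < ε := by positivity
  set C : ℝ := (1/ε) ^ (γ₂/(1-γ₂)) with hCdef
  have hC : 0 ≤ C := Real.rpow_nonneg (by positivity) _
  set E : ℝ := m₂*C + m₃ with hEdef
  have hE : 0 ≤ E := by positivity
  -- the small slope after substitution
  have hslope : l₂ * m₁ < 1 - δ := by simp [hδdef]; linarith
  set r : ℝ := 1 - l₂*m₁/(1-δ) with hrdef
  have hr : 0 < r := by
    have : l₂*m₁/(1-δ) < 1 := (div_lt_one h1δ).mpr hslope
    simp [hrdef]; linarith
  set F : ℝ := l₂*E/(1-δ) + l₃ with hFdef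
  have hF : 0 ≤ F := by positivity
  set M₁ : ℝ := max 1 ((2*(l₁/r)) ^ (1/(1-γ₁))) + 2*(F/r) with hM₁def
  have hM₁ : 0 ≤ M₁ := by
    have h1 : (1:ℝ) ≤ max 1 ((2*(l₁/r)) ^ (1/(1-γ₁))) := le_max_left _ _
    have h2 : 0 ≤ F/r := by positivity
    rw [hM₁def]; linarith
  set M₂ : ℝ := (m₁*M₁ + E)/(1-δ) with hM₂def
  refine ⟨max M₁ M₂, ?_⟩
  intro z₁ z₂ hz₁ hz₂ h1 h2
  -- ε-split on z₂ ^ γ₂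
  have hes : z₂ ^ γ₂ ≤ ε * z₂ + C := eps_bound γ₂ ε z₂ hγ₂ hγ₂' hε hz₂
  have hm2e : m₂ * ε ≤ δ := by
    rw [hεdef]
    rw [mul_div_assoc'] -- m₂ * δ / (m₂+1)
    rw [div_le_iff₀ (by linarith)]
    nlinarith
  have hz2bd : (1-δ) * z₂ ≤ m₁ * z₁ + E := by
    have : m₂ * (z₂ ^ γ₂) ≤ δ * z₂ + m₂ * C := by nlinarith
    nlinarith
  have hz2bd' : z₂ ≤ (m₁ * z₁ + E)/(1-δ) := by
    rw [le_div_iff₀ h1δ]; linarith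
  -- substitute into z₁ inequality
  have hz1 : r * z₁ ≤ l₁ * z₁ ^ γ₁ + F := by
    have h3 : l₂ * z₂ ≤ l₂ * ((m₁ * z₁ + E)/(1-δ)) :=
      mul_le_mul_of_nonneg_left hz2bd' hl₂
    have h4 : l₂ * ((m₁ * z₁ + E)/(1-δ)) = (l₂*m₁/(1-δ)) * z₁ + l₂*E/(1-δ) := by
      field_simp
    rw [hrdef, hFdef]
    rw [h4] at h3
    linarith
  have hz1' : z₁ ≤ (l₁/r) * z₁ ^ γ₁ + F/r := by
    rw [← mul_le_mul_iff_right₀ hr]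
    have hzγ : 0 ≤ z₁ ^ γ₁ := Real.rpow_nonneg hz₁ _
    calc r * z₁ ≤ l₁ * z₁ ^ γ₁ + F := hz1
      _ = r * ((l₁/r) * z₁ ^ γ₁ + F/r) := by field_simp
  have hz1M : z₁ ≤ M₁ := by
    rw [hM₁def]
    exact sub1 γ₁ (l₁/r) (F/r) z₁ hγ₁ hγ₁' (by positivity) (by positivity) hz₁ hz1'
  have hz2M : z₂ ≤ M₂ := by
    rw [hM₂def]
    have : m₁ * z₁ + E ≤ m₁ * M₁ + E := by nlinarith
    rw [le_div_iff₀ h1δ]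
    nlinarith
  exact ⟨hz1M.trans (le_max_left _ _), hz2M.trans (le_max_right _ _)⟩
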